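/- arXiv:2203.16631 — 2 statements merged into one kernel-verified Lean document; each statement's English description precedes it below -/
import Mathlib

section
/- Let $0 < H < \beta$, $c > 0$, $t_0 = (H/(c(\beta-H)))^{1/\beta}$ and fix $\varepsilon_0 \in (0,t_0)$. Then there exists $\hat{c} \in (0,\min(1,c))$ such that $\max\left\{\sup_{t\in[0,t_0-\varepsilon_0]} \frac{t^H}{1-\hat{c}+ct^{\beta}},\ \sup_{t\ge t_0+\varepsilon_0}\frac{t^H}{1-\hat{c}+(c-\hat{c})t^{\beta}}\right\} < \frac{t_0^H}{1+ct_0^{\beta}}$. -/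
open Real Set

lemma f_hasDeriv (H β c : ℝ) (hc : 0 < c) {x : ℝ} (hx : 0 < x) :
    HasDerivAt (fun t : ℝ => t ^ H / (1 + c * t ^ β))
      ((x ^ (H - 1) * (H + c * (H - β) * x ^ β)) / (1 + c * x ^ β) ^ 2) x := by
  have h1 : HasDerivAt (fun t : ℝ => t ^ H) (H * x ^ (H - 1)) x :=
    Real.hasDerivAt_rpow_const (Or.inl hx.ne')
  have h2 : HasDerivAt (fun t : ℝ => 1 + c * t ^ β) (c * (β * x ^ (β - 1))) x := by
    have := ((Real.hasDerivAt_rpow_const (p := β) (Or.inl hx.ne')).const_mul c).const_add 1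
    simpa using this
  have hxβ : (0:ℝ) ≤ x ^ β := Real.rpow_nonneg hx.le β
  have hden : 1 + c * x ^ β ≠ 0 := by positivity
  have := h1.div h2 hden
  refine this.congr_deriv ?_
  have e2 : x ^ H * x ^ (β - 1) = x ^ (H - 1) * x ^ β := by
    rw [← Real.rpow_add hx, ← Real.rpow_add hx]; ring_nf
  have enum : x ^ (H - 1) * (H + c * (H - β) * x ^ β)
      = H * x ^ (H - 1) * (1 + c * x ^ β) - x ^ H * (c * (β * x ^ (β - 1))) := by
    linear_combination (c * β) * e2
  rw [enum]

lemma f_contOn (H β c : ℝ) (hH : 0 < H) (hβ : 0 < β) (hc : 0 < c) {s : Set ℝ}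
    (hs : ∀ x ∈ s, 0 ≤ x) :
    ContinuousOn (fun t : ℝ => t ^ H / (1 + c * t ^ β)) s := by
  intro x hx
  have hxβ : (0:ℝ) ≤ x ^ β := Real.rpow_nonneg (hs x hx) β
  have hden : 1 + c * x ^ β ≠ 0 := by positivity
  exact (ContinuousAt.div
    (Real.continuousAt_rpow_const x H (Or.inr hH.le))
    (by exact (continuousAt_const.mul (Real.continuousAt_rpow_const x β (Or.inr hβ.le))).const_add 1)
    hden).continuousWithinAt

set_option maxHeartbeats 1000000 in
theorem exists_hat_c (H β c ε₀ : ℝ)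
    (hH : 0 < H) (hHβ : H < β) (hc : 0 < c)
    (t₀ : ℝ) (ht₀ : t₀ = (H / (c * (β - H))) ^ (1 / β))
    (hε₀ : 0 < ε₀) (hε₀t₀ : ε₀ < t₀) :
    ∃ chat : ℝ, 0 < chat ∧ chat < min 1 c ∧
      max
        (sSup ((fun t : ℝ => t ^ H / (1 - chat + c * t ^ β)) '' Icc 0 (t₀ - ε₀)))
        (sSup ((fun t : ℝ => t ^ H / (1 - chat + (c - chat) * t ^ β)) '' Ici (t₀ + ε₀)))
        < t₀ ^ H / (1 + c * t₀ ^ β) := by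
  have hβ : 0 < β := hH.trans hHβ
  have hβH : 0 < β - H := by linarith
  set f : ℝ → ℝ := fun t => t ^ H / (1 + c * t ^ β) with hf
  have ht₀pos : 0 < t₀ := by
    rw [ht₀]; exact Real.rpow_pos_of_pos (by positivity) _
  have ht₀β : t₀ ^ β = H / (c * (β - H)) := by
    rw [ht₀, ← Real.rpow_mul (by positivity), one_div, inv_mul_cancel₀ hβ.ne', Real.rpow_one]
  -- strict monotonicity on [0, t₀]
  have hmono : StrictMonoOn f (Icc 0 t₀) := by
    apply strictMonoOn_of_deriv_pos (convex_Icc 0 t₀)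
      (f_contOn H β c hH hβ hc (fun x hx => hx.1))
    intro x hx
    rw [interior_Icc] at hx
    obtain ⟨hx0, hxt⟩ := hx
    rw [(f_hasDeriv H β c hc hx0).deriv]
    have hnum : 0 < H + c * (H - β) * x ^ β := by
      have : x ^ β < t₀ ^ β := Real.rpow_lt_rpow hx0.le hxt hβ
      rw [ht₀β] at this
      have h2 : x ^ β * (c * (β - H)) < H := (lt_div_iff₀ (by positivity)).mp this
      nlinarith
    have hxβ : (0:ℝ) ≤ x ^ β := Real.rpow_nonneg hx0.le β
    positivity
  -- strict antitonicity on [t₀, ∞)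
  have hanti : StrictAntiOn f (Ici t₀) := by
    apply strictAntiOn_of_deriv_neg (convex_Ici t₀)
      (f_contOn H β c hH hβ hc (fun x hx => le_trans ht₀pos.le hx))
    intro x hx
    rw [interior_Ici] at hx
    have hx0 : 0 < x := ht₀pos.trans hx
    rw [(f_hasDeriv H β c hc hx0).deriv]
    have hnum : H + c * (H - β) * x ^ β < 0 := by
      have : t₀ ^ β < x ^ β := Real.rpow_lt_rpow ht₀pos.le hx hβ
      rw [ht₀β] at this
      have h2 : H < x ^ β * (c * (β - H)) := (div_lt_iff₀ (by positivity)).mp this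
      nlinarith
    have hd : (0:ℝ) < x ^ (H - 1) := Real.rpow_pos_of_pos hx0 _
    have hxβ : (0:ℝ) ≤ x ^ β := Real.rpow_nonneg hx0.le β
    have hden : (0:ℝ) < (1 + c * x ^ β) ^ 2 := by positivity
    exact div_neg_of_neg_of_pos (mul_neg_of_pos_of_neg hd hnum) hden
  set A : ℝ := t₀ ^ H / (1 + c * t₀ ^ β) with hA
  have hApos : 0 < A := by
    have := Real.rpow_pos_of_pos ht₀pos H
    have h2 : (0:ℝ) ≤ t₀ ^ β := Real.rpow_nonneg ht₀pos.le β
    positivity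
  set M : ℝ := max (f (t₀ - ε₀)) (f (t₀ + ε₀)) with hM
  have hfnonneg : ∀ x : ℝ, 0 ≤ x → 0 ≤ f x := by
    intro x hx
    have h1 : (0:ℝ) ≤ x ^ H := Real.rpow_nonneg hx H
    have h2 : (0:ℝ) ≤ x ^ β := Real.rpow_nonneg hx β
    positivity
  have hM0 : 0 ≤ M := le_trans (hfnonneg _ (by linarith)) (le_max_left _ _)
  have hMA : M < A := by
    apply max_lt
    · exact hmono ⟨by linarith, by linarith⟩ ⟨le_refl 0 |>.trans ht₀pos.le, le_refl t₀⟩ (by linarith)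
    · exact hanti (le_refl t₀) (by linarith : t₀ ≤ t₀ + ε₀) (by linarith)
  set k : ℝ := (A - M) / A with hk
  have hk0 : 0 < k := by apply div_pos; linarith; exact hApos
  have hk1 : k ≤ 1 := by rw [div_le_one hApos]; linarith
  have hmc : (0:ℝ) < min 1 c := lt_min one_pos hc
  refine ⟨k / 2 * min 1 c, by positivity, ?_, ?_⟩
  · calc k / 2 * min 1 c < 1 * min 1 c := by nlinarith
    _ = min 1 c := one_mul _
  set chat : ℝ := k / 2 * min 1 c with hchat
  have hchat1 : chat ≤ k / 2 := by
    calc chat ≤ k / 2 * 1 := by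
          apply mul_le_mul_of_nonneg_left (min_le_left 1 c) (by positivity)
    _ = k / 2 := mul_one _
  have hchatc : chat ≤ k / 2 * c := mul_le_mul_of_nonneg_left (min_le_right 1 c) (by positivity)
  have hchat0 : 0 < chat := by positivity
  have hkh : 0 < 1 - k / 2 := by linarith
  have hM1 : f (t₀ - ε₀) ≤ M := le_max_left _ _
  have hM2 : f (t₀ + ε₀) ≤ M := le_max_right _ _
  have hBA : M / (1 - k / 2) < A := by
    rw [div_lt_iff₀ hkh]
    have : A * k = A - M := by rw [hk]; field_simp
    nlinarith
  clear_value A M k chat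
  apply max_lt
  · apply lt_of_le_of_lt _ hBA
    apply csSup_le
    · exact ⟨_, ⟨0, ⟨le_refl 0, by linarith⟩, rfl⟩⟩
    rintro y ⟨t, ⟨ht0, ht1⟩, rfl⟩
    have htβ : (0:ℝ) ≤ t ^ β := Real.rpow_nonneg ht0 β
    have htH : (0:ℝ) ≤ t ^ H := Real.rpow_nonneg ht0 H
    have hdenpos : 0 < (1 - k / 2) * (1 + c * t ^ β) := by positivity
    have step1 : t ^ H / (1 - chat + c * t ^ β) ≤ t ^ H / ((1 - k / 2) * (1 + c * t ^ β)) := by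
      apply div_le_div_of_nonneg_left htH hdenpos
      nlinarith
    have step2 : t ^ H / ((1 - k / 2) * (1 + c * t ^ β)) = f t / (1 - k / 2) := by
      rw [hf]; field_simp
    have step3 : f t ≤ f (t₀ - ε₀) :=
      hmono.monotoneOn ⟨ht0, by linarith⟩ ⟨by linarith, by linarith⟩ ht1
    calc t ^ H / (1 - chat + c * t ^ β) ≤ f t / (1 - k / 2) := step1.trans_eq step2
      _ ≤ M / (1 - k / 2) := by
          apply div_le_div_of_nonneg_right _ hkh.le
          exact le_trans step3 hM1
  · apply lt_of_le_of_lt _ hBA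
    apply csSup_le
    · exact ⟨_, ⟨t₀ + ε₀, mem_Ici.mpr (le_refl _), rfl⟩⟩
    rintro y ⟨t, ht, rfl⟩
    simp only [mem_Ici] at ht
    have ht0 : (0:ℝ) ≤ t := by linarith
    have htβ : (0:ℝ) ≤ t ^ β := Real.rpow_nonneg ht0 β
    have htH : (0:ℝ) ≤ t ^ H := Real.rpow_nonneg ht0 H
    have hdenpos : 0 < (1 - k / 2) * (1 + c * t ^ β) := by positivity
    have step1 : t ^ H / (1 - chat + (c - chat) * t ^ β)
        ≤ t ^ H / ((1 - k / 2) * (1 + c * t ^ β)) := by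
      apply div_le_div_of_nonneg_left htH hdenpos
      nlinarith [mul_nonneg (by linarith [hchatc] : (0:ℝ) ≤ k / 2 * c - chat) htβ, hchat1]
    have step2 : t ^ H / ((1 - k / 2) * (1 + c * t ^ β)) = f t / (1 - k / 2) := by
      rw [hf]; field_simp
    have step3 : f t ≤ f (t₀ + ε₀) :=
      hanti.antitoneOn (mem_Ici.mpr (by linarith)) (mem_Ici.mpr (by linarith)) (by linarith)
    calc t ^ H / (1 - chat + (c - chat) * t ^ β) ≤ f t / (1 - k / 2) := step1.trans_eq step2
      _ ≤ M / (1 - k / 2) := by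
          apply div_le_div_of_nonneg_right _ hkh.le
          exact le_trans step3 hM2
end

section
/- Let $F$ be a distribution function satisfying $1 - F(x) = \rho(x)e^{-Cx^{\tau}}$ for $x \ge x_0$, where $C, \tau > 0$ and $\rho$ is regularly varying at infinity with index $\gamma \in \mathbb{R}$. Define $\mu_n = (C^{-1}\log n)^{1/\tau} + \tau^{-1}(C^{-1}\log n)^{1/\tau - 1}C^{-1}\log\big(\rho((C^{-1}\log n)^{1/\tau})\big)$ and $\nu_n = (C\tau)^{-1}(C^{-1}\log n)^{1/\tau-1}$. Then for every $x \in \mathbb{R}$, $\lim_{n\to\infty} n\big(1 - F(\mu_n + \nu_n x)\big) = e^{-x}$. -/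
open Real Filter Topology MeasureTheory


lemma slowVar_unif (k : ℝ → ℝ) (hk : Measurable k)
    (hpt : ∀ v : ℝ, Tendsto (fun t => k (t + v) - k t) atTop (𝓝 0))
    (a u : ℕ → ℝ) (ha : Tendsto a atTop atTop) (hu : ∀ n, u n ∈ Set.Icc (0:ℝ) 1) :
    Tendsto (fun n => k (a n + u n) - k (a n)) atTop (𝓝 0) := by
  rw [NormedAddCommGroup.tendsto_nhds_zero]
  intro ε hε
  have hε3 : 0 < ε / 3 := by positivity
  set ε' := ε / 3 with hε'
  set A : ℕ → Set ℝ := fun N =>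
    Set.Icc (0:ℝ) 2 ∩ ⋂ (m : ℕ) (_ : N ≤ m), {v : ℝ | |k (a m + v) - k (a m)| ≤ ε'} with hA
  set B : ℕ → Set ℝ := fun N =>
    Set.Icc (0:ℝ) 1 ∩ ⋂ (m : ℕ) (_ : N ≤ m), {v : ℝ | |k (a m + u m + v) - k (a m + u m)| ≤ ε'} with hB
  have hmeas : ∀ (c : ℕ → ℝ) (N : ℕ), MeasurableSet
      (⋂ (m : ℕ) (_ : N ≤ m), {v : ℝ | |k (c m + v) - k (c m)| ≤ ε'}) := by
    intro c N
    refine MeasurableSet.iInter fun m => MeasurableSet.iInter fun _ => ?_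
    have h1 : Measurable fun v : ℝ => |k (c m + v) - k (c m)| :=
      ((hk.comp (measurable_const.add measurable_id)).sub measurable_const).abs
    exact measurableSet_le h1 measurable_const
  have hAmeas : ∀ N, MeasurableSet (A N) := fun N =>
    measurableSet_Icc.inter (hmeas a N)
  have hBmeas : ∀ N, MeasurableSet (B N) := fun N =>
    measurableSet_Icc.inter (hmeas (fun m => a m + u m) N)
  have hAmono : Monotone A := by
    intro i j hij
    refine Set.inter_subset_inter_right _ ?_
    intro v hv
    simp only [Set.mem_iInter] at hv ⊢
    exact fun m hm => hv m (le_trans hij hm)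
  have hBmono : Monotone B := by
    intro i j hij
    refine Set.inter_subset_inter_right _ ?_
    intro v hv
    simp only [Set.mem_iInter] at hv ⊢
    exact fun m hm => hv m (le_trans hij hm)
  have hau : Tendsto (fun m => a m + u m) atTop atTop :=
    tendsto_atTop_mono (fun m => le_add_of_nonneg_right (hu m).1) ha
  have hcover : ∀ (c : ℕ → ℝ), Tendsto c atTop atTop → ∀ v : ℝ,
      ∃ N : ℕ, ∀ m ≥ N, |k (c m + v) - k (c m)| ≤ ε' := by
    intro c hc v
    have h1 : Tendsto (fun m => k (c m + v) - k (c m)) atTop (𝓝 0) :=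
      ((hpt v).comp hc).congr (fun m => by simp)
    have h2 : Tendsto (fun m => |k (c m + v) - k (c m)|) atTop (𝓝 0) := by
      simpa using h1.abs
    have h3 := h2.eventually (eventually_le_nhds hε3)
    rw [eventually_atTop] at h3
    exact h3
  have hAcover : ⋃ N, A N = Set.Icc (0:ℝ) 2 := by
    apply Set.Subset.antisymm
    · exact Set.iUnion_subset fun N => Set.inter_subset_left
    · intro v hv
      obtain ⟨N, hN⟩ := hcover a ha v
      refine Set.mem_iUnion.2 ⟨N, hv, ?_⟩
      simp only [Set.mem_iInter]
      exact fun m hm => hN m hm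
  have hBcover : ⋃ N, B N = Set.Icc (0:ℝ) 1 := by
    apply Set.Subset.antisymm
    · exact Set.iUnion_subset fun N => Set.inter_subset_left
    · intro v hv
      obtain ⟨N, hN⟩ := hcover _ hau v
      refine Set.mem_iUnion.2 ⟨N, hv, ?_⟩
      simp only [Set.mem_iInter]
      exact fun m hm => hN m hm
  have hAtend : Tendsto (fun N => volume (A N)) atTop (𝓝 (ENNReal.ofReal 2)) := by
    have := tendsto_measure_iUnion_atTop (μ := volume) hAmono
    rwa [hAcover, Real.volume_Icc, show (2:ℝ) - 0 = 2 by norm_num] at this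
  have hBtend : Tendsto (fun N => volume (B N)) atTop (𝓝 (ENNReal.ofReal 1)) := by
    have := tendsto_measure_iUnion_atTop (μ := volume) hBmono
    rwa [hBcover, Real.volume_Icc, show (1:ℝ) - 0 = 1 by norm_num] at this
  have hA' : ∀ᶠ N in atTop, ENNReal.ofReal (3/2) < volume (A N) :=
    hAtend.eventually (eventually_gt_nhds (by
      rw [ENNReal.ofReal_lt_ofReal_iff (by norm_num)]; norm_num))
  have hB' : ∀ᶠ N in atTop, ENNReal.ofReal (1/2) < volume (B N) :=
    hBtend.eventually (eventually_gt_nhds (by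
      rw [ENNReal.ofReal_lt_ofReal_iff (by norm_num)]; norm_num))
  obtain ⟨N, hNA, hNB⟩ := (hA'.and hB').exists
  filter_upwards [eventually_ge_atTop N] with n hn
  -- translate B N by u n
  set Cn : Set ℝ := (fun v => v - u n) ⁻¹' (B N) with hCn
  have hCmeas : MeasurableSet Cn :=
    (hBmeas N).preimage (measurable_id.sub measurable_const)
  have hCvol : volume Cn = volume (B N) := by
    rw [hCn]
    simpa [sub_eq_add_neg] using
      measure_preimage_add_right (volume : Measure ℝ) (-(u n)) (B N)
  have hCsub : Cn ⊆ Set.Icc (0:ℝ) 2 := by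
    intro v hv
    have h1 : v - u n ∈ Set.Icc (0:ℝ) 1 := (hv : v - u n ∈ B N).1
    have h2 := (hu n).1; have h3 := (hu n).2
    constructor <;> [linarith [h1.1]; linarith [h1.2]]
  have hint : (A N ∩ Cn).Nonempty := by
    by_contra hemp
    rw [Set.not_nonempty_iff_eq_empty] at hemp
    have hdisj : Disjoint (A N) Cn := Set.disjoint_iff_inter_eq_empty.2 hemp
    have h1 : volume (A N ∪ Cn) = volume (A N) + volume Cn :=
      measure_union hdisj hCmeas
    have h2 : volume (A N ∪ Cn) ≤ ENNReal.ofReal 2 := by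
      rw [show ENNReal.ofReal 2 = volume (Set.Icc (0:ℝ) 2) by
        rw [Real.volume_Icc]; norm_num]
      exact measure_mono (Set.union_subset (fun v hv => hv.1) hCsub)
    have h3 : ENNReal.ofReal (3/2) + ENNReal.ofReal (1/2) < volume (A N) + volume Cn := by
      rw [hCvol]
      exact ENNReal.add_lt_add hNA hNB
    rw [← ENNReal.ofReal_add (by norm_num) (by norm_num)] at h3
    norm_num at h3
    rw [h1] at h2
    exact absurd (lt_of_lt_of_le h3 h2) (by simp)
  obtain ⟨v, hvA, hvC⟩ := hint
  have hvA2 : ∀ m ≥ N, |k (a m + v) - k (a m)| ≤ ε' := by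
    have := hvA.2
    simp only [Set.mem_iInter] at this
    exact this
  have hvB : ∀ m ≥ N, |k (a m + u m + (v - u n)) - k (a m + u m)| ≤ ε' := by
    have := (hvC : v - u n ∈ B N).2
    simp only [Set.mem_iInter] at this
    exact this
  have e1 := hvA2 n hn
  have e2 := hvB n hn
  have e3 : a n + u n + (v - u n) = a n + v := by ring
  rw [e3] at e2
  calc ‖k (a n + u n) - k (a n)‖
      = |(k (a n + u n) - k (a n + v)) + (k (a n + v) - k (a n))| := by
        rw [Real.norm_eq_abs]; ring_nf
    _ ≤ |k (a n + u n) - k (a n + v)| + |k (a n + v) - k (a n)| := abs_add_le _ _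
    _ ≤ ε' + ε' := by
        refine add_le_add ?_ e1
        rw [abs_sub_comm]
        exact e2
    _ < ε := by rw [hε']; linarith



lemma slowVar_unif₀ (k : ℝ → ℝ) (hk : Measurable k)
    (hpt : ∀ v : ℝ, Tendsto (fun t => k (t + v) - k t) atTop (𝓝 0))
    (a u : ℕ → ℝ) (ha : Tendsto a atTop atTop) (hu : Tendsto u atTop (𝓝 0)) :
    Tendsto (fun n => k (a n + u n) - k (a n)) atTop (𝓝 0) := by
  classical
  set u' : ℕ → ℝ := fun n => if 0 ≤ u n + 1/2 ∧ u n + 1/2 ≤ 1 then u n + 1/2 else 1/2 with hu'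
  set a' : ℕ → ℝ := fun n => a n - 1/2 with ha'
  have ha'top : Tendsto a' atTop atTop := tendsto_atTop_add_const_right _ _ ha
  have hu'mem : ∀ n, u' n ∈ Set.Icc (0:ℝ) 1 := by
    intro n
    by_cases h : 0 ≤ u n + 1/2 ∧ u n + 1/2 ≤ 1
    · simp only [hu', if_pos h]; exact ⟨h.1, h.2⟩
    · simp only [hu', if_neg h]; constructor <;> norm_num
  have h1 := slowVar_unif k hk hpt a' u' ha'top hu'mem
  have h2 : Tendsto (fun n => k (a' n + 1/2) - k (a' n)) atTop (𝓝 0) :=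
    ((hpt (1/2)).comp ha'top).congr (fun n => by simp)
  have h3 := h1.sub h2
  rw [sub_zero] at h3
  apply h3.congr'
  have hsmall : ∀ᶠ n in atTop, |u n| ≤ 1/2 := by
    have := hu.abs
    rw [abs_zero] at this
    exact this.eventually (eventually_le_nhds (by norm_num))
  filter_upwards [hsmall] with n hn
  have hcond : 0 ≤ u n + 1/2 ∧ u n + 1/2 ≤ 1 := by
    rw [abs_le] at hn; constructor <;> linarith [hn.1, hn.2]
  have e1 : u' n = u n + 1/2 := by simp only [hu', if_pos hcond]
  have e2 : a' n + u' n = a n + u n := by rw [e1, ha']; ring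
  have e3 : a' n + 1/2 = a n := by rw [ha']; ring
  rw [e2, e3]
  ring

lemma slowVar_interval (k : ℝ → ℝ) (hk : Measurable k)
    (hpt : ∀ v : ℝ, Tendsto (fun t => k (t + v) - k t) atTop (𝓝 0))
    {ε : ℝ} (hε : 0 < ε) :
    ∃ T : ℝ, ∀ t ≥ T, ∀ s ∈ Set.Icc (0:ℝ) 1, |k (t + s) - k t| ≤ ε := by
  by_contra hcon
  push_neg at hcon
  have H : ∀ N : ℕ, ∃ t, (N:ℝ) ≤ t ∧ ∃ s, s ∈ Set.Icc (0:ℝ) 1 ∧ ε < |k (t + s) - k t| := by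
    intro N
    obtain ⟨t, ht, s, hs, h⟩ := hcon (N : ℝ)
    exact ⟨t, ht, s, hs, h⟩
  choose t ht s hs hεs using H
  have htt : Tendsto t atTop atTop :=
    tendsto_atTop_mono ht tendsto_natCast_atTop_atTop
  have := slowVar_unif k hk hpt t s htt hs
  have h2 : Tendsto (fun n => |k (t n + s n) - k (t n)|) atTop (𝓝 0) := by
    simpa using this.abs
  have h3 := h2.eventually (eventually_lt_nhds hε)
  obtain ⟨n, hn⟩ := h3.exists
  exact absurd (hεs n) (not_lt.2 hn.le)

lemma slowVar_lin (k : ℝ → ℝ) (hk : Measurable k)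
    (hpt : ∀ v : ℝ, Tendsto (fun t => k (t + v) - k t) atTop (𝓝 0)) :
    ∀ᶠ t in atTop, |k t| ≤ t := by
  obtain ⟨T, hT⟩ := slowVar_interval k hk hpt (show (0:ℝ) < 1/2 by norm_num)
  have key : ∀ n : ℕ, ∀ x : ℝ, T + n ≤ x → x ≤ T + n + 1 → |k x - k T| ≤ (n + 1) * (1/2) := by
    intro n
    induction n with
    | zero =>
      intro x h1 h2
      have hx : x - T ∈ Set.Icc (0:ℝ) 1 := ⟨by push_cast at h1; linarith, by push_cast at h2; linarith⟩
      have := hT T le_rfl (x - T) hx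
      rw [show T + (x - T) = x by ring] at this
      linarith [this]
    | succ m ih =>
      intro x h1 h2
      have hm1 : T + m ≤ x - 1 := by push_cast at h1 ⊢; linarith
      have hm2 : x - 1 ≤ T + m + 1 := by push_cast at h2 ⊢; linarith
      have ihx := ih (x - 1) hm1 hm2
      have hstep := hT (x - 1) (by push_cast at h1; linarith [Nat.cast_nonneg (α := ℝ) m]) 1 ⟨by norm_num, le_rfl⟩
      rw [show x - 1 + 1 = x by ring] at hstep
      have : |k x - k T| ≤ |k x - k (x-1)| + |k (x-1) - k T| := by
        have := abs_add_le (k x - k (x-1)) (k (x-1) - k T)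
        simpa using this
      push_cast
      push_cast at ihx
      linarith
  have key2 : ∀ x ≥ T, |k x - k T| ≤ (x - T + 1) * (1/2) := by
    intro x hx
    have hnn : 0 ≤ x - T := by linarith
    set n : ℕ := ⌊x - T⌋₊ with hn
    have h1 : (n : ℝ) ≤ x - T := Nat.floor_le hnn
    have h2 : x - T < n + 1 := Nat.lt_floor_add_one _
    have := key n x (by linarith) (by linarith)
    calc |k x - k T| ≤ (n + 1) * (1/2) := this
      _ ≤ (x - T + 1) * (1/2) := by linarith
  rw [eventually_atTop]
  refine ⟨max T (2 * |k T| + 1 - T + 2), fun x hx => ?_⟩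
  have hx1 : T ≤ x := le_trans (le_max_left _ _) hx
  have hx2 : 2 * |k T| + 1 - T + 2 ≤ x := le_trans (le_max_right _ _) hx
  have := key2 x hx1
  have habs : |k x| ≤ |k T| + (x - T + 1) * (1/2) := by
    have := abs_sub_abs_le_abs_sub (k x) (k T)
    linarith
  linarith


lemma log_taylor1 (t : ℝ) (ht : |t| ≤ 1/2) : |Real.log (1+t) - t| ≤ 2 * t^2 := by
  have hx : |(-t)| < 1 := by rw [abs_neg]; linarith [abs_nonneg t]
  have h0 := Real.abs_log_sub_add_sum_range_le hx 1
  simp only [Finset.sum_range_one, pow_one] at h0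
  have key : |(-t) + Real.log (1+t)| ≤ |t|^2/(1-|t|) := by
    rw [show (1:ℝ) - -t = 1 + t by ring] at h0
    rw [abs_neg] at h0
    simpa using h0
  have h2 : |t|^2 / (1 - |t|) ≤ 2 * t^2 := by
    rw [sq_abs]
    have h3 : (1:ℝ)/2 ≤ 1 - |t| := by linarith
    have h4 : t^2 / (1 - |t|) ≤ t^2 / (1/2) :=
      div_le_div_of_nonneg_left (by positivity) (by norm_num) h3
    calc t^2 / (1 - |t|) ≤ t^2/(1/2) := h4
      _ = 2 * t^2 := by ring
  calc |Real.log (1+t) - t| = |(-t) + Real.log (1+t)| := by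
        rw [show Real.log (1+t) - t = (-t) + Real.log (1+t) by ring]
    _ ≤ |t|^2 / (1 - |t|) := key
    _ ≤ 2 * t^2 := h2

lemma rpow_taylor (τ : ℝ) (hτ : 0 < τ) (t : ℝ) (ht1 : |t| ≤ 1/2) (ht2 : |t| ≤ 1/(2*τ)) :
    |(1+t)^τ - 1 - τ*t| ≤ (8*τ + τ^2) * t^2 := by
  have h1t : (0:ℝ) < 1 + t := by
    rcases abs_le.1 ht1 with ⟨h, _⟩; linarith
  set e : ℝ := t - Real.log (1+t) with he
  have helog : |e| ≤ 2 * t^2 := by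
    rw [he, abs_sub_comm]; exact log_taylor1 t ht1
  set z : ℝ := τ * t with hz
  set w : ℝ := τ * e with hw
  have hrw : (1+t)^τ = Real.exp (z - w) := by
    rw [Real.rpow_def_of_pos h1t, hz, hw, he]; ring_nf
  have hhalf : τ * (1/(2*τ)) = 1/2 := by field_simp
  have hτt : τ * |t| ≤ 1/2 := by
    calc τ * |t| ≤ τ * (1/(2*τ)) := by nlinarith [abs_nonneg t]
      _ = 1/2 := hhalf
  have hzabs : |z| ≤ 1/2 := by rw [hz, abs_mul, abs_of_pos hτ]; exact hτt
  have hwabs : |w| ≤ 2*τ*t^2 := by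
    rw [hw, abs_mul, abs_of_pos hτ]
    nlinarith [helog]
  have hwabs1 : |w| ≤ 1/2 := by
    have h5 : 2*τ*t^2 = 2*(τ*|t|)*|t| := by rw [← sq_abs]; ring
    calc |w| ≤ 2*τ*t^2 := hwabs
      _ = 2*(τ*|t|)*|t| := h5
      _ ≤ 2*(1/2)*(1/2) := by nlinarith [abs_nonneg t]
      _ = 1/2 := by norm_num
  have hez : Real.exp z ≤ 2 := by
    have h1 : Real.exp z ≤ Real.exp (1/2) := Real.exp_le_exp.2 (le_of_abs_le hzabs)
    have h2 : Real.exp (1/2) ≤ 2 := by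
      nlinarith [Real.exp_one_lt_d9, Real.exp_pos (1/2 : ℝ),
        Real.exp_add (1/2 : ℝ) (1/2), Real.exp_one_gt_d9]
    linarith
  have hpart1 : |Real.exp (z - w) - Real.exp z| ≤ 8 * τ * t^2 := by
    have hfac : Real.exp (z - w) - Real.exp z = Real.exp z * (Real.exp (-w) - 1) := by
      rw [mul_sub, ← Real.exp_add]; ring_nf
    have habs : |Real.exp (-w) - 1| ≤ 2 * |w| := by
      have := Real.abs_exp_sub_one_le (x := -w) (by rw [abs_neg]; linarith)
      rwa [abs_neg] at this
    calc |Real.exp (z - w) - Real.exp z| = Real.exp z * |Real.exp (-w) - 1| := by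
          rw [hfac, abs_mul, abs_of_pos (Real.exp_pos _)]
      _ ≤ 2 * (2 * |w|) := by
          have := Real.exp_pos z
          nlinarith [abs_nonneg (Real.exp (-w) - 1)]
      _ ≤ 2 * (2 * (2*τ*t^2)) := by nlinarith
      _ = 8 * τ * t^2 := by ring
  have hpart2 : |Real.exp z - 1 - z| ≤ τ^2 * t^2 := by
    have := Real.abs_exp_sub_one_sub_id_le (x := z) (by linarith)
    calc |Real.exp z - 1 - z| ≤ z^2 := this
      _ = τ^2 * t^2 := by rw [hz]; ring
  calc |(1+t)^τ - 1 - τ*t|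
      = |(Real.exp (z-w) - Real.exp z) + (Real.exp z - 1 - z)| := by
        rw [hrw, hz]; ring_nf
    _ ≤ |Real.exp (z-w) - Real.exp z| + |Real.exp z - 1 - z| := abs_add_le _ _
    _ ≤ 8*τ*t^2 + τ^2*t^2 := add_le_add hpart1 hpart2
    _ = (8*τ + τ^2) * t^2 := by ring



theorem weibull_like_level_limit (F : ℝ → ℝ) (ρ : ℝ → ℝ) (x₀ C τ γ : ℝ)
    (hx₀ : 0 < x₀) (hC : 0 < C) (hτ : 0 < τ)
    (hFmono : Monotone F) (hF01 : ∀ x, F x ∈ Set.Icc (0 : ℝ) 1)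
    (hFtop : Tendsto F atTop (𝓝 1)) (hFbot : Tendsto F atBot (𝓝 0))
    (hρpos : ∀ x, 0 < x → 0 < ρ x)
    (hρrv : ∀ l : ℝ, 0 < l → Tendsto (fun x => ρ (l * x) / ρ x) atTop (𝓝 (l ^ γ)))
    (htail : ∀ x : ℝ, x₀ ≤ x → 1 - F x = ρ x * Real.exp (-C * x ^ τ))
    (μ ν : ℕ → ℝ)
    (hμ : ∀ n : ℕ, 2 ≤ n → μ n =
      (C⁻¹ * Real.log n) ^ (1 / τ) +
        τ⁻¹ * (C⁻¹ * Real.log n) ^ (1 / τ - 1) *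
          (C⁻¹ * Real.log (ρ ((C⁻¹ * Real.log n) ^ (1 / τ)))))
    (hν : ∀ n : ℕ, 2 ≤ n → ν n = (C * τ)⁻¹ * (C⁻¹ * Real.log n) ^ (1 / τ - 1)) :
    ∀ x : ℝ, Tendsto (fun n : ℕ => (n : ℝ) * (1 - F (μ n + ν n * x))) atTop
      (𝓝 (Real.exp (-x))) := by
  intro x
  have hτ' : (0:ℝ) < 1/τ := by positivity
  -- the slowly varying part in log coordinates
  obtain ⟨k, hkn⟩ : ∃ k : ℝ → ℝ, ∀ t, k t =
      Real.log (1 - F (Real.exp t)) + C * Real.exp t ^ τ - γ * t := ⟨_, fun t => rfl⟩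
  obtain ⟨g, hgn⟩ : ∃ g : ℝ → ℝ, ∀ y, g y = Real.log (ρ y) := ⟨_, fun y => rfl⟩
  have hk : Measurable k := by
    have hkfun : k = fun t => Real.log (1 - F (Real.exp t)) + C * Real.exp t ^ τ - γ * t :=
      funext hkn
    rw [hkfun]
    have h1 : Measurable fun t : ℝ => Real.log (1 - F (Real.exp t)) :=
      Real.measurable_log.comp (measurable_const.sub (hFmono.measurable.comp Real.measurable_exp))
    have h2 : Measurable fun t : ℝ => C * Real.exp t ^ τ :=
      (((Real.continuous_rpow_const hτ.le).measurable).comp Real.measurable_exp).const_mul C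
    exact (h1.add h2).sub (measurable_const.mul measurable_id)
  have hkg : ∀ t : ℝ, x₀ ≤ Real.exp t → k t = g (Real.exp t) - γ * t := by
    intro t h
    have h1 := htail _ h
    have hρp := hρpos _ (Real.exp_pos t)
    rw [hkn, hgn, h1, Real.log_mul (ne_of_gt hρp) (Real.exp_ne_zero _), Real.log_exp]
    ring
  have hk_pt : ∀ v : ℝ, Tendsto (fun t => k (t + v) - k t) atTop (𝓝 0) := by
    intro v
    have h1 : Tendsto (fun t => ρ (Real.exp v * Real.exp t) / ρ (Real.exp t)) atTop
        (𝓝 ((Real.exp v) ^ γ)) := (hρrv _ (Real.exp_pos v)).comp Real.tendsto_exp_atTop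
    have hpow : (0:ℝ) < (Real.exp v) ^ γ := Real.rpow_pos_of_pos (Real.exp_pos v) γ
    have h2 : Tendsto (fun t => Real.log (ρ (Real.exp v * Real.exp t) / ρ (Real.exp t)))
        atTop (𝓝 (γ * v)) := by
      have hl := (Real.continuousAt_log (ne_of_gt hpow)).tendsto.comp h1
      rwa [Real.log_rpow (Real.exp_pos v), Real.log_exp] at hl
    have h3 : Tendsto (fun t => Real.log (ρ (Real.exp v * Real.exp t) / ρ (Real.exp t)) - γ * v)
        atTop (𝓝 0) := by
      have := h2.sub (tendsto_const_nhds (x := γ * v))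
      rwa [sub_self] at this
    apply h3.congr'
    filter_upwards [eventually_ge_atTop (Real.log x₀), eventually_ge_atTop (Real.log x₀ - v)]
      with t h₁ h₂
    have he1 : x₀ ≤ Real.exp t := by
      calc x₀ = Real.exp (Real.log x₀) := (Real.exp_log hx₀).symm
        _ ≤ Real.exp t := Real.exp_le_exp.2 h₁
    have he2 : x₀ ≤ Real.exp (t + v) := by
      calc x₀ = Real.exp (Real.log x₀) := (Real.exp_log hx₀).symm
        _ ≤ Real.exp (t + v) := Real.exp_le_exp.2 (by linarith)
    have hev : Real.exp v * Real.exp t = Real.exp (t + v) := by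
      rw [← Real.exp_add]; ring_nf
    rw [hev, Real.log_div (ne_of_gt (hρpos _ (Real.exp_pos _))) (ne_of_gt (hρpos _ (Real.exp_pos _))),
      hkg _ he2, hkg _ he1, hgn, hgn]
    ring
  have claimK : ∀ᶠ t in atTop, |k t| ≤ t := slowVar_lin k hk hk_pt
  -- sequences
  obtain ⟨s, hsn⟩ : ∃ s : ℕ → ℝ, ∀ n, s n = C⁻¹ * Real.log n := ⟨_, fun n => rfl⟩
  obtain ⟨b, hbn⟩ : ∃ b : ℕ → ℝ, ∀ n, b n = s n ^ (1/τ) := ⟨_, fun n => rfl⟩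
  obtain ⟨δ, hδn⟩ : ∃ δ : ℕ → ℝ, ∀ n, δ n = (g (b n) + x) / (C * τ * s n) := ⟨_, fun n => rfl⟩
  obtain ⟨u, hun⟩ : ∃ u : ℕ → ℝ, ∀ n, u n = b n * (1 + δ n) := ⟨_, fun n => rfl⟩
  have hs_top : Tendsto s atTop atTop := by
    have h1 : Tendsto (fun n : ℕ => Real.log n) atTop atTop :=
      Real.tendsto_log_atTop.comp tendsto_natCast_atTop_atTop
    have := h1.const_mul_atTop (inv_pos.2 hC)
    exact this.congr (fun n => (hsn n).symm)
  have hb_top : Tendsto b atTop atTop := by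
    have := (tendsto_rpow_atTop hτ').comp hs_top
    exact this.congr (fun n => (hbn n).symm)
  have hlb_top : Tendsto (fun n => Real.log (b n)) atTop atTop :=
    Real.tendsto_log_atTop.comp hb_top
  have hsb : ∀ᶠ n in atTop, (b n) ^ τ = s n := by
    filter_upwards [hs_top.eventually_ge_atTop 0] with n hs0
    rw [hbn, ← Real.rpow_mul hs0, one_div, inv_mul_cancel₀ (ne_of_gt hτ), Real.rpow_one]
  -- bound on g (b n)
  have hgb_bound : ∀ᶠ n in atTop, |g (b n)| ≤ (|γ| + 1) * Real.log (b n) := by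
    filter_upwards [hlb_top.eventually claimK, hb_top.eventually_ge_atTop x₀,
      hb_top.eventually_gt_atTop 0, hlb_top.eventually_ge_atTop 0] with n hkb hbx hb0 hlb0
    have hexp : Real.exp (Real.log (b n)) = b n := Real.exp_log hb0
    have := hkg (Real.log (b n)) (by rwa [hexp])
    rw [hexp] at this
    have hg : g (b n) = k (Real.log (b n)) + γ * Real.log (b n) := by linarith [this]
    rw [hg]
    calc |k (Real.log (b n)) + γ * Real.log (b n)|
        ≤ |k (Real.log (b n))| + |γ * Real.log (b n)| := abs_add_le _ _
      _ ≤ Real.log (b n) + |γ| * Real.log (b n) := by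
          refine add_le_add hkb ?_
          rw [abs_mul, abs_of_nonneg hlb0]
      _ = (|γ| + 1) * Real.log (b n) := by ring
  -- the master vanishing quantity
  obtain ⟨Q, hQn⟩ : ∃ Q : ℕ → ℝ, ∀ n, Q n = (|g (b n)| + |x| + 1)^2 / s n := ⟨_, fun n => rfl⟩
  have hQ : Tendsto Q atTop (𝓝 0) := by
    have hlo : Tendsto (fun y : ℝ => Real.log y ^ (2:ℝ) / y ^ τ) atTop (𝓝 0) :=
      (isLittleO_log_rpow_rpow_atTop 2 hτ).tendsto_div_nhds_zero
    have hcomp : Tendsto (fun n => Real.log (b n) ^ (2:ℝ) / (b n) ^ τ) atTop (𝓝 0) :=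
      hlo.comp hb_top
    set c₂ : ℝ := |γ| + |x| + 2 with hc₂
    have hc₂0 : 0 < c₂ := by positivity
    have hbound : ∀ᶠ n in atTop, ‖Q n‖ ≤ c₂^2 * (Real.log (b n) ^ (2:ℝ) / (b n) ^ τ) := by
      filter_upwards [hgb_bound, hlb_top.eventually_ge_atTop 1, hs_top.eventually_gt_atTop 0,
        hsb] with n h1 h2 h3 h4
      have hq : |g (b n)| + |x| + 1 ≤ c₂ * Real.log (b n) := by
        have : |x| + 1 ≤ (|x| + 1) * Real.log (b n) := by nlinarith [abs_nonneg x]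
        calc |g (b n)| + |x| + 1 ≤ (|γ|+1) * Real.log (b n) + (|x|+1) * Real.log (b n) := by
              linarith
          _ = c₂ * Real.log (b n) := by rw [hc₂]; ring
      have hqnn : (0:ℝ) ≤ |g (b n)| + |x| + 1 := by positivity
      have hsq : (|g (b n)| + |x| + 1)^2 ≤ c₂^2 * Real.log (b n)^2 := by nlinarith
      have e2 : Real.log (b n) ^ (2:ℝ) = Real.log (b n)^2 := by
        rw [show (2:ℝ) = ((2:ℕ):ℝ) by norm_num, Real.rpow_natCast]
      rw [Real.norm_eq_abs, abs_of_nonneg (by rw [hQn]; positivity), hQn, e2, h4,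
        ← mul_div_assoc, div_le_div_iff₀ h3 h3]
      nlinarith [h3.le, hsq]
    have := hcomp.const_mul (c₂^2)
    rw [mul_zero] at this
    exact squeeze_zero_norm' hbound this
  have hδ0 : Tendsto δ atTop (𝓝 0) := by
    have hbound : ∀ᶠ n in atTop, ‖δ n‖ ≤ (C*τ)⁻¹ * Q n := by
      filter_upwards [hs_top.eventually_gt_atTop 0] with n h3
      have hq1 : |g (b n) + x| ≤ |g (b n)| + |x| + 1 := by
        calc |g (b n) + x| ≤ |g (b n)| + |x| := abs_add_le _ _
          _ ≤ _ := by linarith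
      have hqnn : (0:ℝ) ≤ |g (b n)| + |x| + 1 := by positivity
      have hq3 : (1:ℝ) ≤ |g (b n)| + |x| + 1 := by linarith [abs_nonneg (g (b n)), abs_nonneg x]
      have hq2 : |g (b n) + x| ≤ (|g (b n)| + |x| + 1)^2 := by nlinarith [hq1, hq3]
      rw [Real.norm_eq_abs, hδn, abs_div, abs_of_pos (by positivity : (0:ℝ) < C * τ * s n), hQn]
      rw [div_le_iff₀ (by positivity : (0:ℝ) < C * τ * s n)]
      have : (C*τ)⁻¹ * ((|g (b n)| + |x| + 1)^2 / s n) * (C * τ * s n)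
          = (|g (b n)| + |x| + 1)^2 := by field_simp
      rw [this]
      exact hq2
    have := hQ.const_mul ((C*τ)⁻¹)
    rw [mul_zero] at this
    exact squeeze_zero_norm' hbound this
  -- small δ
  have hδsmall : ∀ᶠ n in atTop, |δ n| ≤ min (1/2) (1/(2*τ)) := by
    have h := hδ0.abs
    rw [abs_zero] at h
    exact h.eventually (eventually_le_nhds (by positivity))
  have h1δpos : ∀ᶠ n in atTop, (0:ℝ) < 1 + δ n := by
    filter_upwards [hδsmall] with n hn
    have := (abs_le.1 (le_trans hn (min_le_left _ _))).1
    linarith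
  -- identification with μ, ν
  have hu_eq : ∀ᶠ n in atTop, μ n + ν n * x = u n := by
    filter_upwards [eventually_ge_atTop 2, hs_top.eventually_gt_atTop 0] with n hn2 hspos
    rw [hμ n hn2, hν n hn2, hun, hbn, hδn, hbn]
    rw [← hsn n]
    rw [show (1/τ - 1 : ℝ) = 1/τ - 1 from rfl, Real.rpow_sub hspos, Real.rpow_one]
    have hgbn : Real.log (ρ (s n ^ (1/τ))) = g (s n ^ (1/τ)) := (hgn _).symm
    rw [hgbn]
    field_simp
    ring
  have hu_top : Tendsto u atTop atTop := by
    have h1 : Tendsto (fun n => 1 + δ n) atTop (𝓝 1) := by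
      have := (tendsto_const_nhds (x := (1:ℝ))).add hδ0
      rwa [add_zero] at this
    have := hb_top.atTop_mul_pos (by norm_num : (0:ℝ) < 1) h1
    exact this.congr (fun n => (hun n).symm)
  -- exponent
  obtain ⟨D, hDn⟩ : ∃ D : ℕ → ℝ, ∀ n, D n = C * s n + g (u n) - C * (u n) ^ τ :=
    ⟨_, fun n => rfl⟩
  have hfin_eq : ∀ᶠ n : ℕ in atTop, (n:ℝ) * (1 - F (μ n + ν n * x)) = Real.exp (D n) := by
    filter_upwards [eventually_ge_atTop 2, hu_eq, hu_top.eventually_ge_atTop x₀,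
      hu_top.eventually_gt_atTop 0] with n hn2 hequ hux hu0
    rw [hequ, htail _ hux, hDn]
    have hn0 : (0:ℝ) < n := by positivity
    have h1 : Real.exp (Real.log n) = (n:ℝ) := Real.exp_log hn0
    have h2 : Real.exp (g (u n)) = ρ (u n) := by rw [hgn]; exact Real.exp_log (hρpos _ hu0)
    have h3 : C * s n = Real.log n := by rw [hsn]; field_simp
    rw [h3, ← h1, ← h2, ← Real.exp_add, ← Real.exp_add]
    rw [Real.log_exp]
    ring_nf
  -- decomposition of the exponent
  obtain ⟨T₁, hT₁n⟩ : ∃ T : ℕ → ℝ, ∀ n, T n = g (u n) - g (b n) := ⟨_, fun n => rfl⟩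
  obtain ⟨T₂, hT₂n⟩ : ∃ T : ℕ → ℝ, ∀ n, T n = C * s n * ((1 + δ n)^τ - 1 - τ * δ n) :=
    ⟨_, fun n => rfl⟩
  have hDdecomp : ∀ᶠ n in atTop, D n = T₁ n + (-x) - T₂ n := by
    filter_upwards [hs_top.eventually_gt_atTop 0, hb_top.eventually_gt_atTop 0,
      h1δpos, hsb] with n hs0 hb0 hδ1 hbτ
    have key : C * s n * (τ * δ n) = g (b n) + x := by
      rw [hδn]; field_simp
    have e1 : (u n) ^ τ = s n * (1 + δ n)^τ := by
      rw [hun, Real.mul_rpow hb0.le hδ1.le, hbτ]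
    rw [hDn, hT₁n, hT₂n, e1]
    linear_combination -key
  have hT₁ : Tendsto T₁ atTop (𝓝 0) := by
    obtain ⟨w, hwn⟩ : ∃ w : ℕ → ℝ, ∀ n, w n = Real.log (1 + δ n) := ⟨_, fun n => rfl⟩
    have hw0 : Tendsto w atTop (𝓝 0) := by
      have h1 : Tendsto (fun n => 1 + δ n) atTop (𝓝 1) := by
        have := (tendsto_const_nhds (x := (1:ℝ))).add hδ0
        rwa [add_zero] at this
      have h2 := ((Real.continuousAt_log one_ne_zero).tendsto.comp h1)
      rw [Real.log_one] at h2
      exact h2.congr (fun n => (hwn n).symm)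
    have hkterm := slowVar_unif₀ k hk hk_pt (fun n => Real.log (b n)) w hlb_top hw0
    have hlim : Tendsto (fun n => (k (Real.log (b n) + w n) - k (Real.log (b n))) + γ * w n)
        atTop (𝓝 0) := by
      have := hkterm.add (hw0.const_mul γ)
      rwa [mul_zero, add_zero] at this
    apply hlim.congr'
    filter_upwards [hb_top.eventually_ge_atTop x₀, hb_top.eventually_gt_atTop 0,
      h1δpos, hu_top.eventually_ge_atTop x₀, hu_top.eventually_gt_atTop 0] with n hbx hb0 hδ1 hux hu0
    have hlogu : Real.log (u n) = Real.log (b n) + w n := by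
      rw [hun, Real.log_mul (ne_of_gt hb0) (ne_of_gt hδ1), hwn]
    have hgu : g (u n) = k (Real.log (u n)) + γ * Real.log (u n) := by
      have h := hkg (Real.log (u n)) (by rwa [Real.exp_log hu0])
      rw [Real.exp_log hu0] at h
      linarith
    have hgb : g (b n) = k (Real.log (b n)) + γ * Real.log (b n) := by
      have h := hkg (Real.log (b n)) (by rwa [Real.exp_log hb0])
      rw [Real.exp_log hb0] at h
      linarith
    rw [hT₁n, hgu, hgb, hlogu]
    ring
  have hT₂ : Tendsto T₂ atTop (𝓝 0) := by
    have hbound : ∀ᶠ n in atTop, ‖T₂ n‖ ≤ ((8*τ + τ^2)/(C*τ^2)) * Q n := by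
      filter_upwards [hs_top.eventually_gt_atTop 0, hδsmall] with n hs0 hδs
      have ht1 : |δ n| ≤ 1/2 := le_trans hδs (min_le_left _ _)
      have ht2 : |δ n| ≤ 1/(2*τ) := le_trans hδs (min_le_right _ _)
      have htay := rpow_taylor τ hτ (δ n) ht1 ht2
      have hq1 : |g (b n) + x| ≤ |g (b n)| + |x| + 1 := by
        calc |g (b n) + x| ≤ |g (b n)| + |x| := abs_add_le _ _
          _ ≤ _ := by linarith
      have hq2 : (g (b n) + x)^2 ≤ (|g (b n)| + |x| + 1)^2 := by
        nlinarith [hq1, abs_nonneg (g (b n) + x), sq_abs (g (b n) + x)]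
      have hCs : (0:ℝ) < C * s n := mul_pos hC hs0
      have habs : |T₂ n| ≤ C * s n * ((8*τ + τ^2) * δ n^2) := by
        rw [hT₂n, abs_mul, abs_of_pos hCs]
        exact mul_le_mul_of_nonneg_left htay hCs.le
      have hA : C * s n * ((8*τ + τ^2) * δ n^2)
          = ((8*τ + τ^2)/(C*τ^2)) * ((g (b n) + x)^2 / s n) := by
        rw [hδn]; field_simp
      have hmono : ((8*τ + τ^2)/(C*τ^2)) * ((g (b n) + x)^2 / s n)
          ≤ ((8*τ + τ^2)/(C*τ^2)) * Q n := by
        rw [hQn]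
        gcongr
      rw [Real.norm_eq_abs]
      calc |T₂ n| ≤ C * s n * ((8*τ + τ^2) * δ n^2) := habs
        _ = ((8*τ + τ^2)/(C*τ^2)) * ((g (b n) + x)^2 / s n) := hA
        _ ≤ ((8*τ + τ^2)/(C*τ^2)) * Q n := hmono
    have := hQ.const_mul ((8*τ + τ^2)/(C*τ^2))
    rw [mul_zero] at this
    exact squeeze_zero_norm' hbound this
  -- assemble
  have hlim2 : Tendsto (fun n => T₁ n + (-x) - T₂ n) atTop (𝓝 (-x)) := by
    have := (hT₁.add (tendsto_const_nhds (x := -x))).sub hT₂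
    rwa [zero_add, sub_zero] at this
  have hD : Tendsto D atTop (𝓝 (-x)) := by
    apply hlim2.congr'
    filter_upwards [hDdecomp] with n h
    exact h.symm
  have hfinal : Tendsto (fun n => Real.exp (D n)) atTop (𝓝 (Real.exp (-x))) :=
    (Real.continuous_exp.tendsto (-x)).comp hD
  apply hfinal.congr'
  filter_upwards [hfin_eq] with n h
  exact h.symm
end
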